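/- Let V = ℂ^n and let X, Y be n×n complex matrices, i ∈ V a column vector, j ∈ V* a row vector, such that [X,Y] + i·j = 0 (where i·j denotes the rank ≤ 1 matrix given by the outer product). If X and Y are both upper triangular, then for any matrix A that is a (noncommutative) polynomial in X and Y, one has j·A·i = 0. -/

import Mathlib

open Matrix

/-- If `[X,Y] + i·j = 0` and `X`, `Y` are upper triangular, then `j·A·i = 0` for any
noncommutative polynomial `A` in `X` and `Y`. -/
theorem stmt0 (n : ℕ) (X Y : Matrix (Fin n) (Fin n) ℂ) (i j : Fin n → ℂ)
    (heq : X * Y - Y * X + vecMulVec i j = 0)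
    (hX : X.BlockTriangular id) (hY : Y.BlockTriangular id) :
    ∀ A ∈ Algebra.adjoin ℂ ({X, Y} : Set (Matrix (Fin n) (Fin n) ℂ)),
      j ⬝ᵥ (A *ᵥ i) = 0 := by
  have hij : vecMulVec i j = Y * X - X * Y := by
    rw [← neg_sub (X * Y) (Y * X)]
    exact eq_neg_of_add_eq_zero_right heq
  -- key: i r * j s = 0 whenever s ≤ r
  have key : ∀ r s : Fin n, s ≤ r → i r * j s = 0 := by
    intro r s hrs
    have h := congrFun (congrFun hij r) s
    simp only [vecMulVec_apply, Matrix.sub_apply] at h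
    have hd : ∀ (k : Fin n) (P Q : Matrix (Fin n) (Fin n) ℂ), P.BlockTriangular id →
        Q.BlockTriangular id → (P * Q) k k = P k k * Q k k := by
      intro k P Q hP hQ
      rw [Matrix.mul_apply, Finset.sum_eq_single k]
      · intro b _ hb
        rcases lt_or_gt_of_ne hb with h1 | h1
        · rw [hP h1, zero_mul]
        · rw [hQ h1, mul_zero]
      · simp
    rcases lt_or_eq_of_le hrs with hlt | hEq
    · rw [h, (hY.mul hX) hlt, (hX.mul hY) hlt, sub_zero]
    · subst hEq
      rw [h, hd s Y X hY hX, hd s X Y hX hY, mul_comm]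
      ring
  intro A hA
  -- A is upper triangular
  have hAtri : A.BlockTriangular id := by
    induction hA using Algebra.adjoin_induction with
    | mem x hx =>
      rcases hx with h | h
      · exact h ▸ hX
      · exact (Set.mem_singleton_iff.mp h) ▸ hY
    | algebraMap r =>
      rw [Matrix.algebraMap_eq_diagonal]
      exact Matrix.blockTriangular_diagonal _
    | add x y _ _ hx hy => exact hx.add hy
    | mul x y _ _ hx hy => exact hx.mul hy
  -- now compute
  rw [dotProduct, Finset.sum_eq_zero]
  intro r _
  rw [mulVec, dotProduct, Finset.mul_sum, Finset.sum_eq_zero]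
  intro s _
  rcases le_or_gt r s with h | h
  · have hk := key s r h
    calc j r * (A r s * i s) = A r s * (i s * j r) := by ring
      _ = 0 := by rw [hk, mul_zero]
  · rw [hAtri h]
    ring
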